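/- Let M be a complete inner (length) metric space, p ∈ M, and ρ < inj_{M,p}. Then the open ball B(p, ρ) possesses radial uniqueness: every point q ∈ B(p, ρ) is joined to p by a unique geodesic, and this geodesic (parametrized proportionally to arclength by [0,1]) varies continuously with q in the uniform distance. -/

import Mathlib

open Set Metric Filter Topology
open scoped ENNReal NNReal

noncomputable section

/-- Inverse hyperbolic cosine. -/
def arcosh (x : ℝ) : ℝ := Real.log (x + Real.sqrt (x ^ 2 - 1))

/-- `g` restricted to `[a,b]` is a unit-speed geodesic, i.e. an isometric embedding
of the interval `[a,b]`. -/
def IsUnitGeodesicOn {X : Type*} [MetricSpace X] (g : ℝ → X) (a b : ℝ) : Prop :=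
  ∀ s ∈ Set.Icc a b, ∀ t ∈ Set.Icc a b, dist (g s) (g t) = |s - t|

/-- `x` and `y` are joined by a geodesic. -/
def JoinedByGeodesic {X : Type*} [MetricSpace X] (x y : X) : Prop :=
  ∃ g : ℝ → X, IsUnitGeodesicOn g 0 (dist x y) ∧ g 0 = x ∧ g (dist x y) = y

/-- Cosine of the angle of a triangle in the model surface `S_K` at the vertex between
sides of lengths `a` and `b`, with opposite side of length `c` (law of cosines in `S_K`). -/
def modelCosAngle (K a b c : ℝ) : ℝ :=
  if 0 < K then
    (Real.cos (Real.sqrt K * c) - Real.cos (Real.sqrt K * a) * Real.cos (Real.sqrt K * b)) /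
      (Real.sin (Real.sqrt K * a) * Real.sin (Real.sqrt K * b))
  else if K < 0 then
    (Real.cosh (Real.sqrt (-K) * a) * Real.cosh (Real.sqrt (-K) * b) -
        Real.cosh (Real.sqrt (-K) * c)) /
      (Real.sinh (Real.sqrt (-K) * a) * Real.sinh (Real.sqrt (-K) * b))
  else (a ^ 2 + b ^ 2 - c ^ 2) / (2 * a * b)

/-- Length of the side of a triangle in the model surface `S_K` opposite a vertex whose
angle has cosine `co`, the two adjacent sides having lengths `a`, `b`
(law of cosines in `S_K`). -/
def modelDistOfAngle (K a b co : ℝ) : ℝ :=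
  if 0 < K then
    Real.arccos (Real.cos (Real.sqrt K * a) * Real.cos (Real.sqrt K * b) +
      Real.sin (Real.sqrt K * a) * Real.sin (Real.sqrt K * b) * co) / Real.sqrt K
  else if K < 0 then
    arcosh (Real.cosh (Real.sqrt (-K) * a) * Real.cosh (Real.sqrt (-K) * b) -
      Real.sinh (Real.sqrt (-K) * a) * Real.sinh (Real.sqrt (-K) * b) * co) / Real.sqrt (-K)
  else Real.sqrt (a ^ 2 + b ^ 2 - 2 * a * b * co)

/-- Distance in `S_K` from the comparison point `p̃` to the point at arclength `t` along
the side `q̃ r̃` of the comparison triangle for a triangle with `d(p,q) = pq`,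
`d(p,r) = pr`, `d(q,r) = qr`. -/
def modelSideDist (K pq pr qr t : ℝ) : ℝ :=
  modelDistOfAngle K pq t (modelCosAngle K pq qr pr)

/-- Distance in the model surface `S_K` between the two points with Fermi coordinates
`z = (u₁, d₁)` and `w = (u₂, d₂)` (base parameter along a fixed geodesic, and distance
to that geodesic, both points on the same side). -/
def modelFermiDist (K : ℝ) (z w : ℝ × ℝ) : ℝ :=
  if 0 < K then
    Real.arccos (Real.cos (Real.sqrt K * z.2) * Real.cos (Real.sqrt K * w.2) *
        Real.cos (Real.sqrt K * (z.1 - w.1)) +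
      Real.sin (Real.sqrt K * z.2) * Real.sin (Real.sqrt K * w.2)) / Real.sqrt K
  else if K < 0 then
    arcosh (Real.cosh (Real.sqrt (-K) * z.2) * Real.cosh (Real.sqrt (-K) * w.2) *
        Real.cosh (Real.sqrt (-K) * (z.1 - w.1)) -
      Real.sinh (Real.sqrt (-K) * z.2) * Real.sinh (Real.sqrt (-K) * w.2)) / Real.sqrt (-K)
  else Real.sqrt ((z.1 - w.1) ^ 2 + (z.2 - w.2) ^ 2)

/-- `X` is a CAT(K) space: a complete metric space in which any two points at distance
`< π/√K` are joined by a geodesic (no restriction when `K ≤ 0`), and for every geodesic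
triangle of perimeter `< 2π/√K` the distance from a vertex to a point on the opposite
side is at most the corresponding distance in the comparison triangle in `S_K`
(the standard, equivalent, vertex–side form of the comparison). -/
def CatK (K : ℝ) (X : Type*) [MetricSpace X] : Prop :=
  CompleteSpace X ∧
    (∀ x y : X, (0 < K → dist x y < Real.pi / Real.sqrt K) → JoinedByGeodesic x y) ∧
    ∀ (p q r : X) (g : ℝ → X), IsUnitGeodesicOn g 0 (dist q r) → g 0 = q →
      g (dist q r) = r →
      (0 < K → dist p q + dist q r + dist r p < 2 * Real.pi / Real.sqrt K) →
      ∀ t ∈ Set.Icc 0 (dist q r),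
        dist p (g t) ≤ modelSideDist K (dist p q) (dist p r) (dist q r) t

/-- A set is (geodesically) convex if it contains every geodesic joining two of its
points. -/
def GeodesicConvex {X : Type*} [MetricSpace X] (S : Set X) : Prop :=
  ∀ x ∈ S, ∀ y ∈ S, ∀ g : ℝ → X, IsUnitGeodesicOn g 0 (dist x y) → g 0 = x →
    g (dist x y) = y → ∀ t ∈ Set.Icc 0 (dist x y), g t ∈ S

/-- `X` has curvature bounded above (CBA) by `K`: every point has a convex neighborhood
which (with the induced metric) is a CAT(K) space. -/
def CurvBoundedAbove (K : ℝ) (X : Type*) [MetricSpace X] : Prop :=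
  ∀ x : X, ∃ S : Set X, S ∈ nhds x ∧ GeodesicConvex S ∧ CatK K S

/-- `F` preserves the lengths of curves. -/
def LengthPreserving {N M : Type*} [MetricSpace N] [MetricSpace M] (F : N → M) : Prop :=
  ∀ (γ : ℝ → N) (s : Set ℝ), eVariationOn (F ∘ γ) s = eVariationOn γ s

/-- `X` is an intrinsic (length) metric space: the distance between two points is the
infimum of lengths of curves joining them. -/
def IsLengthSpace (X : Type*) [MetricSpace X] : Prop :=
  ∀ x y : X, edist x y =
    ⨅ (γ : ℝ → X) (_ : ContinuousOn γ (Set.Icc 0 1) ∧ γ 0 = x ∧ γ 1 = y),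
      eVariationOn γ (Set.Icc 0 1)

/-- `N` is a subspace of extrinsic curvature `≤ A` in `M`, via the length-preserving map
`F : N → M`:  `N` is a complete length space and the intrinsic distance `s = d_N` and the
extrinsic distance `r = d_M(F·,F·)` satisfy `s - r ≤ (A²/24) r³ + o(r³)`, uniformly over
all pairs of points with `s` sufficiently small. -/
def SubspaceExtCurvLE {N M : Type*} [MetricSpace N] [MetricSpace M] (A : ℝ)
    (F : N → M) : Prop :=
  CompleteSpace N ∧ IsLengthSpace N ∧ LengthPreserving F ∧
    ∀ ε > 0, ∃ δ > 0, ∀ x y : N, dist x y < δ →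
      dist x y - dist (F x) (F y) ≤
        A ^ 2 / 24 * dist (F x) (F y) ^ 3 + ε * dist (F x) (F y) ^ 3

/-- The induced intrinsic (pseudo)distance on a subset `S` of `M`: the infimum of lengths
of curves in `S` joining the two points. -/
def setIntrinsicEDist {X : Type*} [MetricSpace X] (S : Set X) (x y : X) : ℝ≥0∞ :=
  ⨅ (γ : ℝ → X) (_ : ContinuousOn γ (Set.Icc 0 1) ∧ Set.MapsTo γ (Set.Icc 0 1) S ∧
      γ 0 = x ∧ γ 1 = y),
    eVariationOn γ (Set.Icc 0 1)

/-- A subset `N` of `M` (with its induced intrinsic metric, assumed complete) has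
extrinsic curvature `≤ k` in `M`: the intrinsic distance `s` and extrinsic distance `r`
satisfy `s - r ≤ (k²/24) r³ + o(r³)`, uniformly over pairs with `s` sufficiently small. -/
def SetExtrinsicCurvLE {X : Type*} [MetricSpace X] (k : ℝ) (N : Set X) : Prop :=
  IsComplete N ∧
    ∀ ε > 0, ∃ δ > 0, ∀ x ∈ N, ∀ y ∈ N, setIntrinsicEDist N x y < ENNReal.ofReal δ →
      (setIntrinsicEDist N x y).toReal - dist x y ≤
        k ^ 2 / 24 * dist x y ^ 3 + ε * dist x y ^ 3

/-- `T` is `π`-totally-convex: it contains every geodesic of length `< π` joining pairs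
of its points. -/
def PiTotallyConvex {X : Type*} [MetricSpace X] (T : Set X) : Prop :=
  ∀ (g : ℝ → X) (L : ℝ), 0 ≤ L → L < Real.pi → IsUnitGeodesicOn g 0 L →
    g 0 ∈ T → g L ∈ T → ∀ t ∈ Set.Icc 0 L, g t ∈ T

/-- The defining property of the injectivity radius at `p`, for the radius `ρ`:
for every `ε > 0` there is `δ > 0` such that any two Lipschitz curves from `p` to a
common point `q ∈ B(p,ρ)`, parametrized proportionally to arclength by `[0,1]`, whose
lengths are within `δ` of `d(p,q)`, are `ε`-close in the uniform distance. -/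
def InjPropAt {X : Type*} [MetricSpace X] (p : X) (ρ : ℝ) : Prop :=
  ∀ ε > 0, ∃ δ > 0, ∀ q : X, dist p q < ρ →
    ∀ (γ₁ γ₂ : ℝ → X) (L₁ L₂ : ℝ≥0),
      HasConstantSpeedOnWith γ₁ (Set.Icc 0 1) L₁ → γ₁ 0 = p → γ₁ 1 = q →
        |(L₁ : ℝ) - dist p q| < δ →
      HasConstantSpeedOnWith γ₂ (Set.Icc 0 1) L₂ → γ₂ 0 = p → γ₂ 1 = q →
        |(L₂ : ℝ) - dist p q| < δ →
      ∀ t ∈ Set.Icc (0 : ℝ) 1, dist (γ₁ t) (γ₂ t) ≤ ε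

/-- The injectivity radius at `p`. -/
def injRadAt {X : Type*} [MetricSpace X] (p : X) : ℝ≥0∞ :=
  ⨆ (ρ : ℝ) (_ : InjPropAt p ρ), ENNReal.ofReal ρ

/-- The injectivity radius of `X`. -/
def injRad (X : Type*) [MetricSpace X] : ℝ≥0∞ := ⨅ p : X, injRadAt p

/-- `π/√K`, with the convention that it is `∞` for `K ≤ 0`. -/
def piOverSqrt (K : ℝ) : ℝ≥0∞ :=
  if 0 < K then ENNReal.ofReal (Real.pi / Real.sqrt K) else ⊤

/-- `c(A,K)`: the circumference of a circle of (constant geodesic) curvature `A` in the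
model surface `S_K`.  Such a circle exists iff `A² + K > 0`, in which case its
circumference is `2π/√(A² + K)`; otherwise (the complete `A`-curve being a line,
horocycle or equidistant) the value is `∞` by convention. -/
def modelCircumference (A K : ℝ) : ℝ≥0∞ :=
  if 0 < A ^ 2 + K then ENNReal.ofReal (2 * Real.pi / Real.sqrt (A ^ 2 + K)) else ⊤

/-- The Euclidean comparison angle at `p` subtended by `x`, `y`. -/
def comparisonAngle {X : Type*} [MetricSpace X] (p x y : X) : ℝ :=
  Real.arccos ((dist p x ^ 2 + dist p y ^ 2 - dist x y ^ 2) / (2 * dist p x * dist p y))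

/-- The Alexandrov upper angle between the curves `α` and `β` issuing from the common
point `α 0 = β 0`. -/
def upperAngle {X : Type*} [MetricSpace X] (α β : ℝ → X) : ℝ :=
  Filter.limsup (fun st : ℝ × ℝ => comparisonAngle (α 0) (α st.1) (β st.2))
    ((nhdsWithin (0 : ℝ) (Set.Ioi 0)) ×ˢ (nhdsWithin (0 : ℝ) (Set.Ioi 0)))

/-- A continuous function `f` on `s` is `K`-convex if `f'' ≥ -K f` in the barrier sense:
at every interior point and for every `ε > 0` there is a `C²` lower support function `g`
with `g'' (x) ≥ -K f(x) - ε`. -/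
def IsKConvexOn (K : ℝ) (s : Set ℝ) (f : ℝ → ℝ) : Prop :=
  ContinuousOn f s ∧
    ∀ x ∈ interior s, ∀ ε > 0, ∃ (g : ℝ → ℝ) (δ : ℝ), 0 < δ ∧
      Set.Ioo (x - δ) (x + δ) ⊆ s ∧
      ContDiffOn ℝ 2 g (Set.Ioo (x - δ) (x + δ)) ∧ g x = f x ∧
      (∀ y ∈ Set.Ioo (x - δ) (x + δ), g y ≤ f y) ∧
      -K * f x - ε ≤ deriv (deriv g) x

/-- `γ` is parametrized by arclength on `[a,b]`. -/
def IsArclengthParamOn {X : Type*} [MetricSpace X] (γ : ℝ → X) (a b : ℝ) : Prop :=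
  ∀ s t, a ≤ s → s ≤ t → t ≤ b → eVariationOn γ (Set.Icc s t) = ENNReal.ofReal (t - s)

/-- `γ` (parametrized by arclength on `[0,Λ]`) is a curve of extrinsic curvature `≤ k`:
for subarcs, arclength `s` and chordlength `r` satisfy `s - r ≤ (k²/24) s³ + o(s³)`. -/
def CurveExtCurvLE {X : Type*} [MetricSpace X] (γ : ℝ → X) (Λ k : ℝ) : Prop :=
  IsArclengthParamOn γ 0 Λ ∧
    ∀ ε > 0, ∃ δ > 0, ∀ s t, 0 ≤ s → s ≤ t → t ≤ Λ → t - s < δ →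
      (t - s) - dist (γ s) (γ t) ≤ k ^ 2 / 24 * (t - s) ^ 3 + ε * (t - s) ^ 3

/-- The quadrilateral region in `S_K` (in Fermi coordinates) with top vertices `zp`, `zq`
and bottom vertices their feet on the base geodesic: points over the base segment lying
on or below some geodesic joining `zp` to `zq`. -/
def fermiQuadRegion (K : ℝ) (zp zq : ℝ × ℝ) : Set (ℝ × ℝ) :=
  {z | min zp.1 zq.1 ≤ z.1 ∧ z.1 ≤ max zp.1 zq.1 ∧ 0 ≤ z.2 ∧
    ∃ d', z.2 ≤ d' ∧
      modelFermiDist K zp (z.1, d') + modelFermiDist K (z.1, d') zq =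
        modelFermiDist K zp zq}

/-- `g : [0,1] → M` is a geodesic from `p` to `q` parametrized proportionally to
arclength. -/
def IsGeodesicFromTo {X : Type*} [MetricSpace X] (g : ℝ → X) (p q : X) : Prop :=
  g 0 = p ∧ g 1 = q ∧
    ∀ s ∈ Set.Icc (0:ℝ) 1, ∀ t ∈ Set.Icc (0:ℝ) 1, dist (g s) (g t) = |s - t| * dist p q

set_option maxHeartbeats 1000000

section AuxRadialUniqueness

variable {X : Type*} [MetricSpace X]

lemma evar_comp_affine (f : ℝ → X) {c : ℝ} (k : ℝ) (hc : 0 < c) (a b : ℝ) :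
    eVariationOn (fun s => f (c * s + k)) (Icc a b) = eVariationOn f (Icc (c*a+k) (c*b+k)) := by
  have := eVariationOn.comp_eq_of_monotoneOn f (fun s => c * s + k)
    (fun x _ y _ hxy => by dsimp only; nlinarith : MonotoneOn (fun s => c * s + k) (Icc a b))
  rw [image_affine_Icc' hc] at this
  exact this

lemma evar_comp_mul (f : ℝ → X) {c : ℝ} (hc : 0 < c) (a b : ℝ) :
    eVariationOn (fun s => f (c * s)) (Icc a b) = eVariationOn f (Icc (c*a) (c*b)) := by
  simpa using evar_comp_affine f 0 hc a b

lemma constSpeed_congr {f₁ f₂ : ℝ → X} {s : Set ℝ} {l : ℝ≥0} (h : EqOn f₁ f₂ s)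
    (hf : HasConstantSpeedOnWith f₁ s l) : HasConstantSpeedOnWith f₂ s l := by
  intro x hx y hy
  rw [← eVariationOn.eq_of_eqOn (h.mono inter_subset_left)]
  exact hf hx hy

lemma evar_Icc_eq_of_dist (g : ℝ → X) {D a' b' : ℝ} (hD : 0 ≤ D)
    (hg : ∀ s ∈ Icc a' b', ∀ t ∈ Icc a' b', dist (g s) (g t) = D * |s - t|)
    {a b : ℝ} (h1 : a' ≤ a) (hab : a ≤ b) (h2 : b ≤ b') :
    eVariationOn g (Icc a b) = ENNReal.ofReal (D * (b - a)) := by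
  have hsub : Icc a b ⊆ Icc a' b' := Icc_subset_Icc h1 h2
  apply le_antisymm
  · have lip : LipschitzOnWith D.toNNReal g (Icc a b) := by
      apply LipschitzOnWith.of_dist_le_mul
      intro x hx y hy
      rw [hg x (hsub hx) y (hsub hy), Real.coe_toNNReal D hD, Real.dist_eq]
    have h0 : eVariationOn (g ∘ id) (Icc a b) ≤ D.toNNReal * eVariationOn id (Icc a b) :=
      lip.comp_eVariationOn_le (mapsTo_id _)
    have h1' : eVariationOn (id : ℝ → ℝ) (Icc a b) ≤ ENNReal.ofReal (b - a) := by
      have := MonotoneOn.eVariationOn_le (f := (id : ℝ → ℝ)) (s := Icc a b)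
        (fun x _ y _ h => h) (left_mem_Icc.2 hab) (right_mem_Icc.2 hab)
      simpa using this
    calc eVariationOn g (Icc a b) = eVariationOn (g ∘ id) (Icc a b) := rfl
      _ ≤ D.toNNReal * eVariationOn id (Icc a b) := h0
      _ ≤ D.toNNReal * ENNReal.ofReal (b - a) := by gcongr
      _ = ENNReal.ofReal (D * (b - a)) := by
          rw [ENNReal.ofReal_mul hD]; rfl
  · have := eVariationOn.edist_le g (left_mem_Icc.2 hab) (right_mem_Icc.2 hab)
    refine le_trans (le_of_eq ?_) this
    rw [edist_dist, hg a (hsub (left_mem_Icc.2 hab)) b (hsub (right_mem_Icc.2 hab)),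
      abs_of_nonpos (by linarith), neg_sub]

lemma variation_right_cont (f : ℝ → X) {b B : ℝ} (hbB : b < B)
    (hf : ContinuousWithinAt f (Icc b B) b) (hV : eVariationOn f (Icc b B) ≠ ⊤) :
    ∀ c : ℝ, 0 < c → ∃ t, b < t ∧ t ≤ B ∧ eVariationOn f (Icc b t) < ENNReal.ofReal c := by
  intro c hc
  by_contra hcon
  push_neg at hcon
  obtain ⟨δ, hδ, hδf⟩ := Metric.tendsto_nhdsWithin_nhds.mp hf (c/4) (by positivity)
  set V := eVariationOn f (Icc b B) with hVdef
  have hcV : ENNReal.ofReal c ≤ V := hcon B hbB le_rfl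
  have hVpos : V ≠ 0 := by
    intro h
    rw [h] at hcV
    simp only [nonpos_iff_eq_zero, ENNReal.ofReal_eq_zero] at hcV
    linarith
  have hsublt : V - ENNReal.ofReal (c/4) < V :=
    ENNReal.sub_lt_self hV hVpos (by simp [ENNReal.ofReal_eq_zero]; linarith)
  rw [hVdef, eVariationOn, lt_iSup_iff] at hsublt
  obtain ⟨⟨n, u, hu, us⟩, hsum⟩ := hsublt
  simp only at hsum
  set S := ∑ i ∈ Finset.range n, edist (f (u (i + 1))) (f (u i)) with hSdef
  have hVS : V < S + ENNReal.ofReal (c/4) := by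
    rcases lt_or_ge V (S + ENNReal.ofReal (c/4)) with h | h
    · exact h
    · exfalso
      have : S ≤ V - ENNReal.ofReal (c/4) := ENNReal.le_sub_of_add_le_right (by simp) h
      exact absurd (lt_of_lt_of_le hsum this) (lt_irrefl _)
  by_cases hex : ∃ i, i ≤ n ∧ b < u i
  · set j := Nat.find hex with hj
    obtain ⟨hjn, hbj⟩ := Nat.find_spec hex
    set w₁ := u j with hw1
    have hw1B : w₁ ≤ B := (us j).2
    set w := min ((b + w₁)/2) (min B (b + δ/2)) with hw
    have hbw : b < w := by
      simp only [hw, lt_min_iff]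
      refine ⟨by linarith, hbB, by linarith⟩
    have hwB : w ≤ B := le_trans (min_le_right _ _) (min_le_left _ _)
    have hww1 : w ≤ w₁ := le_trans (min_le_left _ _) (by linarith)
    have hwd : edist (f w) (f b) ≤ ENNReal.ofReal (c/4) := by
      rw [edist_dist]
      apply ENNReal.ofReal_le_ofReal
      refine le_of_lt (hδf ⟨hbw.le, hwB⟩ ?_)
      rw [Real.dist_eq, abs_of_nonneg (by linarith)]
      have : w ≤ b + δ/2 := le_trans (min_le_right _ _) (min_le_right _ _)
      linarith
    have key : ∀ i, i ≤ n → u i = b ∨ w ≤ u i := by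
      intro i hin
      rcases lt_or_ge i j with hij | hij
      · left
        have := Nat.find_min hex hij
        push_neg at this
        exact le_antisymm (this hin) (us i).1
      · right
        exact le_trans hww1 (hu hij)
    set v := fun i => max (u i) w with hv
    have hvmono : Monotone v := fun i j h => max_le_max (hu h) le_rfl
    have hvs : ∀ i, v i ∈ Icc w B := fun i => ⟨le_max_right _ _, max_le (us i).2 hwB⟩
    have hT : (∑ i ∈ Finset.range n, edist (f (v (i + 1))) (f (v i)))
        ≤ eVariationOn f (Icc w B) := eVariationOn.sum_le (f := f) (n := n) hvmono hvs
    have hterm : ∀ i ∈ Finset.range n,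
        edist (f (u (i + 1))) (f (u i)) ≤ edist (f (v (i + 1))) (f (v i)) +
          (if u i = b ∧ w ≤ u (i+1) then ENNReal.ofReal (c/4) else 0) := by
      intro i hi
      rw [Finset.mem_range] at hi
      rcases key (i+1) hi with h1 | h1
      · have h0 : u i = b := le_antisymm (le_trans (hu (Nat.le_succ i)) h1.le) (us i).1
        rw [h0, h1, edist_self]
        exact zero_le
      · rcases key i (le_of_lt hi) with h0 | h0
        · have hvi : v i = w := max_eq_right (by rw [h0]; exact hbw.le)
          have hvi1 : v (i+1) = u (i+1) := max_eq_left h1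
          rw [if_pos ⟨h0, h1⟩, h0, hvi, hvi1]
          calc edist (f (u (i+1))) (f b) ≤ edist (f (u (i+1))) (f w) + edist (f w) (f b) :=
                edist_triangle _ _ _
            _ ≤ edist (f (u (i+1))) (f w) + ENNReal.ofReal (c/4) := by gcongr
        · have hvi : v i = u i := max_eq_left h0
          have hvi1 : v (i+1) = u (i+1) := max_eq_left (le_trans h0 (hu (Nat.le_succ i)))
          rw [hvi, hvi1]
          exact le_add_of_nonneg_right zero_le
    have hcard : ({i ∈ Finset.range n | u i = b ∧ w ≤ u (i+1)}).card ≤ 1 := by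
      rw [Finset.card_le_one]
      intro i hi i' hi'
      simp only [Finset.mem_filter, Finset.mem_range] at hi hi'
      by_contra hne
      rcases Nat.lt_or_ge i i' with h | h
      · have : u (i+1) ≤ u i' := hu h
        rw [hi'.2.1] at this
        have := le_trans hi.2.2 this
        linarith
      · have h' : i' < i := lt_of_le_of_ne h (fun hh => hne hh.symm)
        have : u (i'+1) ≤ u i := hu h'
        rw [hi.2.1] at this
        have := le_trans hi'.2.2 this
        linarith
    have hsum_ite : (∑ i ∈ Finset.range n,
        (if u i = b ∧ w ≤ u (i+1) then ENNReal.ofReal (c/4) else 0)) ≤ ENNReal.ofReal (c/4) := by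
      rw [← Finset.sum_filter, Finset.sum_const]
      rcases Finset.card_le_one_iff_subset_singleton.mp hcard with ⟨x, hx⟩
      calc ({i ∈ Finset.range n | u i = b ∧ w ≤ u (i+1)}).card • ENNReal.ofReal (c/4)
          ≤ ({x} : Finset ℕ).card • ENNReal.ofReal (c/4) := by
            exact nsmul_le_nsmul_left zero_le (Finset.card_le_card hx)
        _ = ENNReal.ofReal (c/4) := by simp
    have hST : S ≤ eVariationOn f (Icc w B) + ENNReal.ofReal (c/4) := by
      calc S ≤ ∑ i ∈ Finset.range n, (edist (f (v (i + 1))) (f (v i)) +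
            (if u i = b ∧ w ≤ u (i+1) then ENNReal.ofReal (c/4) else 0)) :=
            Finset.sum_le_sum hterm
        _ = (∑ i ∈ Finset.range n, edist (f (v (i + 1))) (f (v i))) +
            ∑ i ∈ Finset.range n, (if u i = b ∧ w ≤ u (i+1) then ENNReal.ofReal (c/4) else 0) :=
            Finset.sum_add_distrib
        _ ≤ eVariationOn f (Icc w B) + ENNReal.ofReal (c/4) := add_le_add hT hsum_ite
    have hadd : eVariationOn f (Icc b w) + eVariationOn f (Icc w B) = V := by
      have := eVariationOn.Icc_add_Icc f (s := Icc b B) hbw.le hwB ⟨hbw.le, hwB⟩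
      rwa [inter_eq_self_of_subset_right (Icc_subset_Icc le_rfl hwB),
        inter_eq_self_of_subset_right (Icc_subset_Icc hbw.le le_rfl),
        inter_self] at this
    have hV2top : eVariationOn f (Icc w B) ≠ ⊤ := by
      intro h
      rw [← hadd, h, add_top] at hV
      exact hV rfl
    have hchain : ENNReal.ofReal c + eVariationOn f (Icc w B) <
        ENNReal.ofReal (c/2) + eVariationOn f (Icc w B) := by
      calc ENNReal.ofReal c + eVariationOn f (Icc w B)
          ≤ eVariationOn f (Icc b w) + eVariationOn f (Icc w B) := by
            gcongr; exact hcon w hbw hwB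
        _ = V := hadd
        _ < S + ENNReal.ofReal (c/4) := hVS
        _ ≤ (eVariationOn f (Icc w B) + ENNReal.ofReal (c/4)) + ENNReal.ofReal (c/4) := by
            gcongr
        _ = ENNReal.ofReal (c/2) + eVariationOn f (Icc w B) := by
            rw [add_assoc, ← ENNReal.ofReal_add (by positivity) (by positivity)]
            rw [add_comm]
            congr 2
            ring
    rw [ENNReal.add_lt_add_iff_right hV2top] at hchain
    rw [ENNReal.ofReal_lt_ofReal_iff (by positivity)] at hchain
    linarith
  · have hS0 : S = 0 := by
      apply Finset.sum_eq_zero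
      intro i hi
      rw [Finset.mem_range] at hi
      push_neg at hex
      have h1 : u i = b := le_antisymm (hex i (le_of_lt hi)) (us i).1
      have h2 : u (i+1) = b := le_antisymm (hex (i+1) hi) (us (i+1)).1
      rw [h1, h2, edist_self]
    rw [hS0, zero_add] at hVS
    have := lt_of_le_of_lt hcV hVS
    rw [ENNReal.ofReal_lt_ofReal_iff (by positivity)] at this
    linarith

lemma variation_left_cont (f : ℝ → X) {A b : ℝ} (hAb : A < b)
    (hf : ContinuousWithinAt f (Icc A b) b) (hV : eVariationOn f (Icc A b) ≠ ⊤) :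
    ∀ c : ℝ, 0 < c → ∃ t, A ≤ t ∧ t < b ∧ eVariationOn f (Icc t b) < ENNReal.ofReal c := by
  intro c hc
  have hrefl : ∀ u v : ℝ, (f ∘ Neg.neg) '' (Icc (-v) (-u)) = f '' Icc u v ∨ True := fun _ _ => Or.inr trivial
  have hneg : ∀ u v : ℝ, eVariationOn (f ∘ Neg.neg) (Icc (-v) (-u)) = eVariationOn f (Icc u v) := by
    intro u v
    rw [eVariationOn.comp_eq_of_antitoneOn f Neg.neg (fun x _ y _ hxy => neg_le_neg hxy)]
    congr 1
    rw [show (Neg.neg '' Icc (-v) (-u)) = -Icc (-v) (-u) from Set.image_neg_eq_neg,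
      Set.neg_Icc, neg_neg, neg_neg]
  have hcont : ContinuousWithinAt (f ∘ Neg.neg) (Icc (-b) (-A)) (-b) := by
    apply ContinuousWithinAt.comp (by rwa [neg_neg] : ContinuousWithinAt f (Icc A b) (-(-b)))
      continuous_neg.continuousWithinAt
    intro x hx
    exact ⟨by simpa using neg_le_neg hx.2, by simpa using neg_le_neg hx.1⟩
  have hVneg : eVariationOn (f ∘ Neg.neg) (Icc (-b) (-A)) ≠ ⊤ := by
    rw [hneg A b]; exact hV
  obtain ⟨t', h1, h2, h3⟩ := variation_right_cont (f ∘ Neg.neg) (by linarith) hcont hVneg c hc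
  refine ⟨-t', by linarith, by linarith, ?_⟩
  rw [← hneg (-t') b]
  rw [show -(-t') = t' from neg_neg t']
  exact h3

lemma variation_surjOn (f : ℝ → X) (hf : ContinuousOn f (Icc 0 1))
    (hV : eVariationOn f (Icc 0 1) ≠ ⊤) {y : ℝ}
    (hy0 : 0 ≤ y) (hy1 : y ≤ (eVariationOn f (Icc 0 1)).toReal) :
    ∃ t, t ∈ Icc (0:ℝ) 1 ∧ (eVariationOn f (Icc 0 t)).toReal = y := by
  set ψ : ℝ → ℝ := fun t => (eVariationOn f (Icc 0 t)).toReal with hψ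
  have hfin : ∀ t, t ≤ 1 → eVariationOn f (Icc 0 t) ≠ ⊤ :=
    fun t ht => ne_top_of_le_ne_top hV (eVariationOn.mono f (Icc_subset_Icc le_rfl ht))
  have hfin2 : ∀ s t : ℝ, 0 ≤ s → t ≤ 1 → eVariationOn f (Icc s t) ≠ ⊤ :=
    fun s t hs ht => ne_top_of_le_ne_top hV (eVariationOn.mono f (Icc_subset_Icc hs ht))
  have hadd : ∀ s t : ℝ, 0 ≤ s → s ≤ t → t ≤ 1 →
      eVariationOn f (Icc 0 s) + eVariationOn f (Icc s t) = eVariationOn f (Icc 0 t) := by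
    intro s t h0s hst ht1
    have := eVariationOn.Icc_add_Icc f (s := univ) h0s hst (mem_univ s)
    simpa using this
  have hψ0 : ψ 0 = 0 := by
    rw [hψ]
    simp only [Icc_self]
    rw [eVariationOn.subsingleton f subsingleton_singleton]
    simp
  have hmono : ∀ s t : ℝ, 0 ≤ s → s ≤ t → t ≤ 1 → ψ s ≤ ψ t := by
    intro s t h0s hst ht1
    apply ENNReal.toReal_le_toReal (hfin s (by linarith)) (hfin t ht1) |>.mpr
    exact eVariationOn.mono f (Icc_subset_Icc le_rfl hst)
  set S := {s : ℝ | s ∈ Icc (0:ℝ) 1 ∧ ψ s ≤ y} with hS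
  have hne : (0:ℝ) ∈ S := ⟨⟨le_rfl, zero_le_one⟩, by rw [hψ0]; exact hy0⟩
  have hbdd : BddAbove S := ⟨1, fun x hx => hx.1.2⟩
  set t₀ := sSup S with ht₀
  have ht₀0 : 0 ≤ t₀ := le_csSup hbdd hne
  have ht₀1 : t₀ ≤ 1 := csSup_le ⟨0, hne⟩ (fun x hx => hx.1.2)
  have hub : ψ t₀ ≤ y := by
    by_contra hgt
    push_neg at hgt
    have ht₀pos : 0 < t₀ := by
      rcases eq_or_lt_of_le ht₀0 with h | h
      · rw [← h] at hgt; rw [hψ0] at hgt; linarith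
      · exact h
    obtain ⟨s, hs0, hst, hvar⟩ := variation_left_cont f ht₀pos
      ((hf t₀ ⟨ht₀0, ht₀1⟩).mono (Icc_subset_Icc le_rfl ht₀1)) (hfin t₀ ht₀1) (ψ t₀ - y)
      (by linarith)
    obtain ⟨r, hrS, hsr⟩ := exists_lt_of_lt_csSup ⟨0, hne⟩ hst
    have hrt₀ : r ≤ t₀ := le_csSup hbdd hrS
    have h1 : eVariationOn f (Icc r t₀) < ENNReal.ofReal (ψ t₀ - y) :=
      lt_of_le_of_lt (eVariationOn.mono f (Icc_subset_Icc hsr.le le_rfl)) hvar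
    have h2 : ψ t₀ = ψ r + (eVariationOn f (Icc r t₀)).toReal := by
      simp only [hψ]
      rw [← hadd r t₀ hrS.1.1 hrt₀ ht₀1]
      rw [ENNReal.toReal_add (hfin r (le_trans hrt₀ ht₀1)) (hfin2 r t₀ hrS.1.1 ht₀1)]
    have h3 : (eVariationOn f (Icc r t₀)).toReal < ψ t₀ - y := by
      rw [← ENNReal.lt_ofReal_iff_toReal_lt (hfin2 r t₀ hrS.1.1 ht₀1)]
      exact h1
    have := hrS.2
    linarith
  have hlb : y ≤ ψ t₀ := by
    by_contra hlt
    push_neg at hlt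
    have ht₀lt1 : t₀ < 1 := by
      rcases eq_or_lt_of_le ht₀1 with h | h
      · exfalso; rw [h] at hlt; linarith
      · exact h
    obtain ⟨t, htgt, ht1, hvar⟩ := variation_right_cont f ht₀lt1
      ((hf t₀ ⟨ht₀0, ht₀1⟩).mono (Icc_subset_Icc ht₀0 le_rfl)) (hfin2 t₀ 1 ht₀0 le_rfl)
      (y - ψ t₀) (by linarith)
    have hψt : ψ t = ψ t₀ + (eVariationOn f (Icc t₀ t)).toReal := by
      simp only [hψ]
      rw [← hadd t₀ t ht₀0 htgt.le ht1,
        ENNReal.toReal_add (hfin t₀ ht₀1) (hfin2 t₀ t ht₀0 ht1)]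
    have h3 : (eVariationOn f (Icc t₀ t)).toReal < y - ψ t₀ := by
      rw [← ENNReal.lt_ofReal_iff_toReal_lt (hfin2 t₀ t ht₀0 ht1)]
      exact hvar
    have htS : t ∈ S := ⟨⟨by linarith, ht1⟩, by linarith⟩
    have := le_csSup hbdd htS
    linarith
  exact ⟨t₀, ⟨ht₀0, ht₀1⟩, le_antisymm hub hlb⟩

lemma exists_const_speed_curve (hlen : IsLengthSpace X) (x y : X) {η : ℝ} (hη : 0 < η) :
    ∃ (γ : ℝ → X) (L : ℝ≥0), HasConstantSpeedOnWith γ (Icc 0 1) L ∧ γ 0 = x ∧ γ 1 = y ∧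
      dist x y ≤ L ∧ (L : ℝ) < dist x y + η := by
  have hlt : edist x y < edist x y + ENNReal.ofReal η :=
    ENNReal.lt_add_right (edist_ne_top x y) (by simp [ENNReal.ofReal_eq_zero]; linarith)
  rw [hlen x y] at hlt
  nth_rewrite 2 [← hlen x y] at hlt
  obtain ⟨f, hf⟩ := iInf_lt_iff.mp hlt
  obtain ⟨⟨hcont, hf0, hf1⟩, hflen⟩ := iInf_lt_iff.mp hf
  set V := eVariationOn f (Icc 0 1) with hVdef
  have hVfin : V ≠ ⊤ := (lt_of_lt_of_le hflen le_top).ne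
  set L : ℝ≥0 := V.toNNReal with hLdef
  have hLcoe : (L : ℝ) = V.toReal := rfl
  have hLV : (L : ℝ≥0∞) = V := ENNReal.coe_toNNReal hVfin
  have hlow : edist x y ≤ V := by
    rw [← hf0, ← hf1]
    exact eVariationOn.edist_le f (left_mem_Icc.2 zero_le_one) (right_mem_Icc.2 zero_le_one)
  have hdistL : dist x y ≤ (L : ℝ) := by
    rw [hLcoe]
    have := ENNReal.toReal_le_toReal (edist_ne_top x y) hVfin |>.mpr hlow
    rwa [edist_dist, ENNReal.toReal_ofReal dist_nonneg] at this
  have hupp : (L : ℝ) < dist x y + η := by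
    rw [hLcoe]
    have h2 : (edist x y + ENNReal.ofReal η).toReal = dist x y + η := by
      rw [ENNReal.toReal_add (edist_ne_top x y) ENNReal.ofReal_ne_top, edist_dist,
        ENNReal.toReal_ofReal dist_nonneg, ENNReal.toReal_ofReal hη.le]
    rw [← h2]
    exact ENNReal.toReal_lt_toReal hVfin (by simp [edist_ne_top x y]) |>.mpr hflen
  have hlbv : LocallyBoundedVariationOn f (Icc 0 1) :=
    BoundedVariationOn.locallyBoundedVariationOn hVfin
  set ψ : ℝ → ℝ := variationOnFromTo f (Icc 0 1) 0 with hψdef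
  have hmem0 : (0:ℝ) ∈ Icc (0:ℝ) 1 := left_mem_Icc.2 zero_le_one
  have hmem1 : (1:ℝ) ∈ Icc (0:ℝ) 1 := right_mem_Icc.2 zero_le_one
  have hψeq : ∀ t ∈ Icc (0:ℝ) 1, ψ t = (eVariationOn f (Icc 0 t)).toReal := by
    intro t ht
    rw [hψdef, variationOnFromTo.eq_of_le f _ ht.1]
    congr 2
    rw [Icc_inter_Icc, sup_idem, min_eq_right ht.2]
  set NP := naturalParameterization f (Icc 0 1) 0 with hNPdef
  have himg : ψ '' Icc 0 1 = Icc 0 (L : ℝ) := by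
    apply Subset.antisymm
    · rintro _ ⟨t, ht, rfl⟩
      rw [hψeq t ht]
      constructor
      · exact ENNReal.toReal_nonneg
      · rw [hLcoe]
        exact ENNReal.toReal_le_toReal (ne_top_of_le_ne_top hVfin
          (eVariationOn.mono f (Icc_subset_Icc le_rfl ht.2))) hVfin |>.mpr
          (eVariationOn.mono f (Icc_subset_Icc le_rfl ht.2))
    · rintro z ⟨hz0, hz1⟩
      obtain ⟨t, ht, hteq⟩ := variation_surjOn f hcont hVfin hz0 (hLcoe ▸ hz1)
      exact ⟨t, ht, by rw [hψeq t ht]; exact hteq⟩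
  have hNPspeed : HasUnitSpeedOn NP (Icc 0 (L:ℝ)) := by
    rw [← himg]
    exact has_unit_speed_naturalParameterization f hlbv hmem0
  have hNP0 : NP 0 = x := by
    have h := edist_naturalParameterization_eq_zero hlbv hmem0 hmem0
    rw [variationOnFromTo.self] at h
    rw [hNPdef]
    rw [edist_eq_zero] at h
    rw [h, hf0]
  have hNPL : NP (L:ℝ) = y := by
    have h := edist_naturalParameterization_eq_zero hlbv hmem0 hmem1
    have hψ1 : variationOnFromTo f (Icc 0 1) 0 1 = (L:ℝ) := by
      have := hψeq 1 hmem1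
      rw [hψdef] at this
      rw [this, hLcoe]
    rw [hψ1, edist_eq_zero] at h
    rw [hNPdef, h, hf1]
  rcases eq_or_lt_of_le (zero_le : (0 : ℝ≥0) ≤ L) with hL0 | hLpos
  · refine ⟨fun _ => x, 0, ?_, rfl, ?_, ?_, ?_⟩
    · rw [hasConstantSpeedOnWith_zero_iff]
      intro a _ b _
      simp
    · have : dist x y = 0 := le_antisymm (by rw [← hL0] at hdistL; exact_mod_cast hdistL) dist_nonneg
      rw [dist_comm] at this
      rw [dist_eq_zero] at this
      exact this.symm
    · rw [← hL0] at hdistL; exact_mod_cast hdistL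
    · simp only [NNReal.coe_zero]
      have : dist x y = 0 := le_antisymm (by rw [← hL0] at hdistL; exact_mod_cast hdistL) dist_nonneg
      linarith
  · have hLposR : (0:ℝ) < (L:ℝ) := hLpos
    refine ⟨fun t => NP ((L:ℝ) * t), L, ?_, ?_, ?_, hdistL, hupp⟩
    · rw [hasConstantSpeedOnWith_iff_ordered]
      intro u hu v hv huv
      have hint : Icc (0:ℝ) 1 ∩ Icc u v = Icc u v := by
        rw [Icc_inter_Icc, max_eq_right hu.1, min_eq_right hv.2]
      rw [hint, evar_comp_mul NP hLposR u v]
      have hsub : Icc ((L:ℝ)*u) ((L:ℝ)*v) ⊆ Icc 0 (L:ℝ) := by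
        apply Icc_subset_Icc
        · exact mul_nonneg hLposR.le hu.1
        · nlinarith [hv.2]
      rw [← inter_eq_self_of_subset_right hsub]
      rw [hNPspeed ⟨mul_nonneg hLposR.le hu.1, by nlinarith [hu.2]⟩
        ⟨mul_nonneg hLposR.le hv.1, by nlinarith [hv.2]⟩]
      congr 1
      push_cast
      ring
    · simp only [mul_zero]; exact hNP0
    · simp only [mul_one]; exact hNPL

lemma geodesic_evar {g : ℝ → X} {p q : X} (hg : IsGeodesicFromTo g p q)
    {a b : ℝ} (h1 : 0 ≤ a) (hab : a ≤ b) (h2 : b ≤ 1) :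
    eVariationOn g (Icc a b) = ENNReal.ofReal (dist p q * (b - a)) :=
  evar_Icc_eq_of_dist g dist_nonneg
    (fun s hs t ht => by rw [hg.2.2 s hs t ht, mul_comm]) h1 hab h2

lemma geodesic_speed {g : ℝ → X} {p q : X} (hg : IsGeodesicFromTo g p q) :
    HasConstantSpeedOnWith g (Icc 0 1) ⟨dist p q, dist_nonneg⟩ := by
  apply hasConstantSpeedOnWith_iff_ordered.mpr
  intro u hu v hv huv
  have hint : Icc (0:ℝ) 1 ∩ Icc u v = Icc u v := by
    rw [Icc_inter_Icc, max_eq_right hu.1, min_eq_right hv.2]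
  rw [hint, geodesic_evar hg hu.1 huv hv.2]
  rfl

lemma const_speed_dist_le {γ : ℝ → X} {L : ℝ≥0} (h : HasConstantSpeedOnWith γ (Icc 0 1) L)
    {u v : ℝ} (hu : u ∈ Icc (0:ℝ) 1) (hv : v ∈ Icc (0:ℝ) 1) (huv : u ≤ v) :
    dist (γ u) (γ v) ≤ (L : ℝ) * (v - u) := by
  have h2 : edist (γ u) (γ v) ≤ eVariationOn γ (Icc 0 1 ∩ Icc u v) :=
    eVariationOn.edist_le γ ⟨hu, le_rfl, huv⟩ ⟨hv, huv, le_rfl⟩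
  rw [h hu hv, edist_dist] at h2
  exact (ENNReal.ofReal_le_ofReal_iff (mul_nonneg L.2 (by linarith))).mp h2

lemma exists_geodesic [CompleteSpace X] (hlen : IsLengthSpace X) {p : X} {ρ' : ℝ}
    (hInj : InjPropAt p ρ') {q : X} (hq : dist p q < ρ') :
    ∃ g : ℝ → X, IsGeodesicFromTo g p q := by
  set d := dist p q with hd
  have hc : ∀ n : ℕ, ∃ (γ : ℝ → X) (L : ℝ≥0), HasConstantSpeedOnWith γ (Icc 0 1) L ∧
      γ 0 = p ∧ γ 1 = q ∧ dist p q ≤ L ∧ (L : ℝ) < dist p q + 1/(n+1) :=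
    fun n => exists_const_speed_curve hlen p q (by positivity)
  choose c Lc hspeed hc0 hc1 hlow hupp using hc
  have hLdist : ∀ n : ℕ, |((Lc n : ℝ)) - d| < 1/(n+1) := by
    intro n
    rw [abs_of_nonneg (by linarith [hlow n])]
    linarith [hupp n]
  have hcauchy : ∀ t ∈ Icc (0:ℝ) 1, CauchySeq (fun n => c n t) := by
    intro t ht
    rw [Metric.cauchySeq_iff]
    intro ε hε
    obtain ⟨δ, hδ, hδP⟩ := hInj (ε/2) (by linarith)
    obtain ⟨N, hN⟩ := exists_nat_one_div_lt hδ
    refine ⟨N, fun m hm n hn => ?_⟩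
    have hb : ∀ k : ℕ, N ≤ k → |((Lc k : ℝ)) - d| < δ := by
      intro k hk
      refine lt_of_lt_of_le (hLdist k) (le_trans ?_ hN.le)
      apply one_div_le_one_div_of_le (by positivity)
      push_cast
      have : (N:ℝ) ≤ k := Nat.cast_le.mpr hk
      linarith
    have := hδP q hq (c m) (c n) (Lc m) (Lc n) (hspeed m) (hc0 m) (hc1 m) (hb m hm)
      (hspeed n) (hc0 n) (hc1 n) (hb n hn) t ht
    calc dist (c m t) (c n t) ≤ ε/2 := this
      _ < ε := by linarith
  have hg' : ∀ t, ∃ x : X, t ∈ Icc (0:ℝ) 1 → Tendsto (fun n => c n t) atTop (𝓝 x) := by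
    intro t
    by_cases ht : t ∈ Icc (0:ℝ) 1
    · obtain ⟨x, hx⟩ := cauchySeq_tendsto_of_complete (hcauchy t ht)
      exact ⟨x, fun _ => hx⟩
    · exact ⟨p, fun h => absurd h ht⟩
  choose g hgt using hg'
  have hg0 : g 0 = p := by
    have h1 : Tendsto (fun n => c n 0) atTop (𝓝 (g 0)) := hgt 0 (left_mem_Icc.2 zero_le_one)
    have h2 : Tendsto (fun n => c n 0) atTop (𝓝 p) := by
      simp only [hc0]
      exact tendsto_const_nhds
    exact tendsto_nhds_unique h1 h2
  have hg1 : g 1 = q := by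
    have h1 : Tendsto (fun n => c n 1) atTop (𝓝 (g 1)) := hgt 1 (right_mem_Icc.2 zero_le_one)
    have h2 : Tendsto (fun n => c n 1) atTop (𝓝 q) := by
      simp only [hc1]
      exact tendsto_const_nhds
    exact tendsto_nhds_unique h1 h2
  have hdle : ∀ u ∈ Icc (0:ℝ) 1, ∀ v ∈ Icc (0:ℝ) 1, u ≤ v →
      dist (g u) (g v) ≤ d * (v - u) := by
    intro u hu v hv huv
    have htd : Tendsto (fun n => dist (c n u) (c n v)) atTop (𝓝 (dist (g u) (g v))) :=
      (hgt u hu).dist (hgt v hv)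
    have hrhs : Tendsto (fun n : ℕ => (d + 1/(n+1)) * (v - u)) atTop (𝓝 (d * (v - u))) := by
      have h0 : Tendsto (fun n : ℕ => 1/((n:ℝ)+1)) atTop (𝓝 0) :=
        tendsto_one_div_add_atTop_nhds_zero_nat
      have := (tendsto_const_nhds (x := d) (f := atTop (α := ℕ))).add h0
      rw [add_zero] at this
      have := this.mul (tendsto_const_nhds (x := v - u))
      simpa using this
    refine le_of_tendsto_of_tendsto' htd hrhs (fun n => ?_)
    calc dist (c n u) (c n v) ≤ (Lc n : ℝ) * (v - u) := const_speed_dist_le (hspeed n) hu hv huv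
      _ ≤ (d + 1/(n+1)) * (v - u) := by
          apply mul_le_mul_of_nonneg_right (le_of_lt (hupp n)) (by linarith)
  have hradial : ∀ t ∈ Icc (0:ℝ) 1, dist p (g t) = d * t := by
    intro t ht
    have hA : dist p (g t) ≤ d * t := by
      have := hdle 0 (left_mem_Icc.2 zero_le_one) t ht ht.1
      rw [hg0] at this
      simpa using this
    have hB : dist (g t) q ≤ d * (1 - t) := by
      have := hdle t ht 1 (right_mem_Icc.2 zero_le_one) ht.2
      rw [hg1] at this
      linarith [this]
    have htri : d ≤ dist p (g t) + dist (g t) q := by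
      rw [hd]; exact dist_triangle p (g t) q
    nlinarith [hA, hB, htri]
  refine ⟨g, hg0, hg1, ?_⟩
  have haux : ∀ s ∈ Icc (0:ℝ) 1, ∀ t ∈ Icc (0:ℝ) 1, s ≤ t →
      dist (g s) (g t) = (t - s) * d := by
    intro s hs t ht hst
    have hle : dist (g s) (g t) ≤ d * (t - s) := hdle s hs t ht hst
    have htr : dist p (g t) ≤ dist p (g s) + dist (g s) (g t) := dist_triangle _ _ _
    rw [hradial s hs, hradial t ht] at htr
    nlinarith
  intro s hs t ht
  rcases le_total s t with h | h
  · rw [haux s hs t ht h, abs_of_nonpos (by linarith), neg_sub]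
  · rw [dist_comm, haux t ht s hs h, abs_of_nonneg (by linarith)]

lemma geodesics_close {p : X} {ρ' : ℝ} (hInj : InjPropAt p ρ') {q : X} (hq : dist p q < ρ')
    {g₁ g₂ : ℝ → X} (h₁ : IsGeodesicFromTo g₁ p q) (h₂ : IsGeodesicFromTo g₂ p q) :
    EqOn g₁ g₂ (Icc 0 1) := by
  intro t ht
  rw [← dist_le_zero]
  apply le_of_forall_pos_le_add
  intro ε hε
  obtain ⟨δ, hδ, hδP⟩ := hInj ε hε
  have h0 : |((⟨dist p q, dist_nonneg⟩ : ℝ≥0) : ℝ) - dist p q| < δ := by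
    simp only [NNReal.coe_mk, sub_self, abs_zero]
    exact hδ
  have := hδP q hq g₁ g₂ _ _ (geodesic_speed h₁) h₁.1 h₁.2.1 h0
    (geodesic_speed h₂) h₂.1 h₂.2.1 h0 t ht
  linarith

lemma geodesics_continuity (hlen : IsLengthSpace X) {p : X} {ρ' : ℝ}
    (hInj : InjPropAt p ρ') {q : X} (hq : dist p q < ρ') {ε : ℝ} (hε : 0 < ε) :
    ∃ δ > 0, ∀ q' : X, dist p q' < ρ' → dist q q' < δ →
      ∀ g g' : ℝ → X, IsGeodesicFromTo g p q → IsGeodesicFromTo g' p q' →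
      ∀ t ∈ Icc (0:ℝ) 1, dist (g t) (g' t) ≤ ε := by
  obtain ⟨δ₀, hδ₀, hP⟩ := hInj (ε/2) (by linarith)
  set δm := min (δ₀/4) (ε/8) with hδm
  have hδmpos : 0 < δm := by positivity
  refine ⟨δm, hδmpos, ?_⟩
  intro q' hq' hqq' g g' hg hg' t ht
  by_cases hqeq : q' = q
  · subst hqeq
    rw [geodesics_close hInj hq hg hg' ht]
    rw [dist_self]
    linarith
  -- setup
  set d := dist p q with hd
  set d' := dist p q' with hd'
  have hd'0 : 0 ≤ d' := dist_nonneg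
  have hqq'pos : 0 < dist q' q := dist_pos.mpr hqeq
  obtain ⟨σ, Lσ, hσspeed, hσ0, hσ1, hσlow, hσupp⟩ := exists_const_speed_curve hlen q' q hδmpos
  have hLσpos : 0 < (Lσ : ℝ) := lt_of_lt_of_le hqq'pos hσlow
  set Λ := d' + (Lσ : ℝ) with hΛ
  have hΛpos : 0 < Λ := by linarith
  set h : ℝ → X := fun s => if s ≤ d' then g' (s / d') else σ ((s - d') / (Lσ:ℝ)) with hhdef
  have hh0 : h 0 = p := by
    simp only [hhdef, if_pos hd'0, zero_div]
    exact hg'.1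
  have hhΛ : h Λ = q := by
    have : ¬ (Λ ≤ d') := by rw [hΛ]; linarith
    simp only [hhdef, if_neg this]
    have : (Λ - d') / (Lσ:ℝ) = 1 := by rw [hΛ]; field_simp; ring
    rw [this, hσ1]
  -- unit speed on the two pieces
  have hpiece1 : HasConstantSpeedOnWith h (Icc 0 d') 1 := by
    rcases eq_or_lt_of_le hd'0 with h0 | h0
    · apply hasConstantSpeedOnWith_of_subsingleton
      rw [← h0, Icc_self]
      exact subsingleton_singleton
    · apply constSpeed_congr (f₁ := fun s => g' (d'⁻¹ * s))
      · intro s hs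
        simp only [hhdef, if_pos hs.2]
        rw [div_eq_inv_mul]
      · rw [hasConstantSpeedOnWith_iff_ordered]
        intro u hu v hv huv
        have hint : Icc (0:ℝ) d' ∩ Icc u v = Icc u v := by
          rw [Icc_inter_Icc, max_eq_right hu.1, min_eq_right hv.2]
        rw [hint, evar_comp_mul g' (inv_pos.mpr h0) u v]
        rw [geodesic_evar hg' (mul_nonneg (inv_pos.mpr h0).le hu.1) (by gcongr)
          (by rw [inv_mul_le_iff₀ h0]; simpa using hv.2)]
        rw [← hd']
        congr 1
        push_cast
        field_simp
  have hpiece2 : HasConstantSpeedOnWith h (Icc d' Λ) 1 := by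
    apply constSpeed_congr (f₁ := fun s => σ ((Lσ:ℝ)⁻¹ * s + -(d' * (Lσ:ℝ)⁻¹)))
    · intro s hs
      show σ ((Lσ:ℝ)⁻¹ * s + -(d' * (Lσ:ℝ)⁻¹)) = h s
      by_cases hcase : s ≤ d'
      · have hs' : s = d' := le_antisymm hcase hs.1
        rw [hs']
        have e1 : (Lσ:ℝ)⁻¹ * d' + -(d' * (Lσ:ℝ)⁻¹) = 0 := by ring
        rw [e1, hσ0]
        simp only [hhdef, le_refl, if_true]
        rcases eq_or_lt_of_le hd'0 with hz | hz
        · rw [← hz]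
          rw [zero_div, hg'.1]
          have hz' : dist p q' = 0 := by rw [← hd', ← hz]
          exact (dist_eq_zero.mp hz').symm
        · rw [div_self (ne_of_gt hz), hg'.2.1]
      · simp only [hhdef, if_neg hcase]
        congr 1
        field_simp
        ring
    · rw [hasConstantSpeedOnWith_iff_ordered]
      intro u hu v hv huv
      have hint : Icc d' Λ ∩ Icc u v = Icc u v := by
        rw [Icc_inter_Icc, max_eq_right hu.1, min_eq_right hv.2]
      rw [hint, evar_comp_affine σ (-(d' * (Lσ:ℝ)⁻¹)) (inv_pos.mpr hLσpos) u v]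
      have e2 : (Lσ:ℝ)⁻¹ * u + -(d' * (Lσ:ℝ)⁻¹) = (u - d') / (Lσ:ℝ) := by field_simp; ring
      have e3 : (Lσ:ℝ)⁻¹ * v + -(d' * (Lσ:ℝ)⁻¹) = (v - d') / (Lσ:ℝ) := by field_simp; ring
      rw [e2, e3]
      have hu' : (u - d') / (Lσ:ℝ) ∈ Icc (0:ℝ) 1 := by
        constructor
        · apply div_nonneg (by linarith [hu.1]) hLσpos.le
        · rw [div_le_one hLσpos]
          have := hu.2
          rw [hΛ] at this
          linarith
      have hv' : (v - d') / (Lσ:ℝ) ∈ Icc (0:ℝ) 1 := by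
        constructor
        · apply div_nonneg (by linarith [hv.1]) hLσpos.le
        · rw [div_le_one hLσpos]
          have := hv.2
          rw [hΛ] at this
          linarith
      have hsub : Icc ((u - d') / (Lσ:ℝ)) ((v - d') / (Lσ:ℝ)) ⊆ Icc (0:ℝ) 1 :=
        Icc_subset_Icc hu'.1 hv'.2
      rw [← inter_eq_self_of_subset_right hsub, hσspeed hu' hv']
      congr 1
      push_cast
      field_simp
      ring
  have hunit : HasConstantSpeedOnWith h (Icc 0 Λ) 1 :=
    HasConstantSpeedOnWith.Icc_Icc hpiece1 hpiece2
  -- the concatenated curve reparametrized on [0,1]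
  set γ : ℝ → X := fun s => h (Λ * s) with hγdef
  set Lnn : ℝ≥0 := ⟨Λ, hΛpos.le⟩ with hLnn
  have hγspeed : HasConstantSpeedOnWith γ (Icc 0 1) Lnn := by
    rw [hasConstantSpeedOnWith_iff_ordered]
    intro u hu v hv huv
    have hint : Icc (0:ℝ) 1 ∩ Icc u v = Icc u v := by
      rw [Icc_inter_Icc, max_eq_right hu.1, min_eq_right hv.2]
    rw [hint]
    rw [show γ = fun s => h (Λ * s) from rfl]
    rw [evar_comp_mul h hΛpos u v]
    have hsub : Icc (Λ*u) (Λ*v) ⊆ Icc 0 Λ := by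
      apply Icc_subset_Icc (mul_nonneg hΛpos.le hu.1)
      nlinarith [hv.2]
    rw [← inter_eq_self_of_subset_right hsub,
      hunit ⟨mul_nonneg hΛpos.le hu.1, by nlinarith [hu.2]⟩
        ⟨mul_nonneg hΛpos.le hv.1, by nlinarith [hv.2]⟩]
    congr 1
    simp only [NNReal.coe_one]
    show 1 * (Λ * v - Λ * u) = Λ * (v - u)
    ring
  have hγ0 : γ 0 = p := by
    simp only [hγdef, mul_zero]
    exact hh0
  have hγ1 : γ 1 = q := by
    simp only [hγdef, mul_one]
    exact hhΛ
  -- length estimate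
  have habs : |d' - d| ≤ dist q q' := by
    rw [hd, hd']
    rw [abs_sub_comm]
    have := abs_dist_sub_le q q' p
    rwa [dist_comm q p, dist_comm q' p] at this
  have hΛd : |(Lnn:ℝ) - d| < δ₀ := by
    have h1 : (Lnn : ℝ) = Λ := rfl
    rw [h1, hΛ]
    have h2 : (Lσ:ℝ) < dist q' q + δm := hσupp
    have h3 : dist q' q < δm := by rwa [dist_comm]
    have h4 : δm ≤ δ₀/4 := min_le_left _ _
    rw [abs_lt]
    rw [abs_le] at habs
    constructor <;> nlinarith [habs.1, habs.2, hqq', hLσpos]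
  have hdd : |((⟨d, dist_nonneg⟩ : ℝ≥0) : ℝ) - d| < δ₀ := by
    simp only [NNReal.coe_mk, sub_self, abs_zero]
    exact hδ₀
  have hstep1 : dist (g t) (γ t) ≤ ε/2 := by
    have hgs : HasConstantSpeedOnWith g (Icc 0 1) ⟨d, dist_nonneg⟩ := geodesic_speed hg
    exact hP q hq g γ _ _ hgs hg.1 hg.2.1 hdd hγspeed hγ0 hγ1 hΛd t ht
  have hstep2 : dist (γ t) (g' t) ≤ 2 * (Lσ:ℝ) := by
    by_cases hcase : Λ * t ≤ d'
    · have hγt : γ t = g' ((Λ * t) / d') := by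
        simp only [hγdef, hhdef, if_pos hcase]
      rcases eq_or_lt_of_le hd'0 with hz | hz
      · have ht0 : t = 0 := by
          have h1 : Λ * t ≤ 0 := by rw [← hz] at hcase; exact hcase
          have h2 : 0 ≤ Λ * t := mul_nonneg hΛpos.le ht.1
          nlinarith [ht.1]
        rw [ht0, hγ0, ← hg'.1]
        rw [dist_self]
        positivity
      · have hu1 : (Λ * t) / d' ∈ Icc (0:ℝ) 1 := by
          constructor
          · exact div_nonneg (mul_nonneg hΛpos.le ht.1) hz.le
          · rw [div_le_one hz]; exact hcase
        rw [hγt, hg'.2.2 _ hu1 t ht]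
        rw [← hd']
        have e4 : |Λ * t / d' - t| = t * (Lσ:ℝ) / d' := by
          rw [abs_of_nonneg]
          · rw [hΛ]; field_simp; ring
          · rw [sub_nonneg, le_div_iff₀ hz]
            rw [hΛ]; nlinarith [ht.1]
        rw [e4]
        rw [div_mul_cancel₀ _ (ne_of_gt hz)]
        nlinarith [ht.2, ht.1]
    · push_neg at hcase
      have hγt : γ t = σ ((Λ * t - d') / (Lσ:ℝ)) := by
        simp only [hγdef, hhdef, if_neg (not_le.mpr hcase)]
      set u2 := (Λ * t - d') / (Lσ:ℝ) with hu2
      have hu2mem : u2 ∈ Icc (0:ℝ) 1 := by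
        constructor
        · exact div_nonneg (by linarith) hLσpos.le
        · rw [div_le_one hLσpos]
          rw [hΛ]
          nlinarith [ht.2]
      have hb1 : dist (γ t) q' ≤ (Lσ:ℝ) := by
        rw [hγt, ← hσ0, dist_comm]
        calc dist (σ 0) (σ u2) ≤ (Lσ:ℝ) * (u2 - 0) :=
              const_speed_dist_le hσspeed (left_mem_Icc.2 zero_le_one) hu2mem hu2mem.1
          _ ≤ (Lσ:ℝ) := by nlinarith [hu2mem.2]
      have hb2 : dist q' (g' t) ≤ (Lσ:ℝ) := by
        rw [← hg'.2.1, hg'.2.2 1 (right_mem_Icc.2 zero_le_one) t ht, ← hd']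
        rw [abs_of_nonneg (by linarith [ht.2])]
        -- (1 - t) * d' ≤ Lσ
        nlinarith [ht.2, hcase, hd'0, hΛpos]
      calc dist (γ t) (g' t) ≤ dist (γ t) q' + dist q' (g' t) := dist_triangle _ _ _
        _ ≤ 2 * (Lσ:ℝ) := by linarith
  have hfin : 2 * (Lσ:ℝ) ≤ ε/2 := by
    have h2 : (Lσ:ℝ) < dist q' q + δm := hσupp
    have h3 : dist q' q < δm := by rwa [dist_comm]
    have h4 : δm ≤ ε/8 := min_le_right _ _
    linarith
  calc dist (g t) (g' t) ≤ dist (g t) (γ t) + dist (γ t) (g' t) := dist_triangle _ _ _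
    _ ≤ ε/2 + ε/2 := by linarith
    _ = ε := by ring

end AuxRadialUniqueness

/-- **Radial uniqueness** (§5.1).  Let `M` be a complete inner (length) metric space,
`p ∈ M` and `ρ < inj_{M,p}`.  Then the open ball `B(p,ρ)` possesses radial uniqueness:
every `q ∈ B(p,ρ)` is joined to `p` by a unique geodesic, and this geodesic (parametrized
proportionally to arclength by `[0,1]`) varies continuously with `q` in the uniform
distance. -/
theorem radial_uniqueness {M : Type*} [MetricSpace M] [CompleteSpace M]
    (hlen : IsLengthSpace M) (p : M) (ρ : ℝ) (hρ : ENNReal.ofReal ρ < injRadAt p) :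
    ∃ G : M → ℝ → M, ∀ q : M, dist p q < ρ →
      IsGeodesicFromTo (G q) p q ∧
      (∀ g : ℝ → M, IsGeodesicFromTo g p q → Set.EqOn g (G q) (Set.Icc 0 1)) ∧
      ∀ ε > 0, ∃ δ > 0, ∀ q' : M, dist p q' < ρ → dist q q' < δ →
        ∀ t ∈ Set.Icc (0:ℝ) 1, dist (G q t) (G q' t) ≤ ε := by
  have h1 : ∃ ρ' : ℝ, InjPropAt p ρ' ∧ ENNReal.ofReal ρ < ENNReal.ofReal ρ' := by
    rw [injRadAt, lt_iSup_iff] at hρ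
    obtain ⟨ρ', h⟩ := hρ
    rw [lt_iSup_iff] at h
    obtain ⟨hi, hlt⟩ := h
    exact ⟨ρ', hi, hlt⟩
  obtain ⟨ρ', hInj, hρρ'⟩ := h1
  have hball : ∀ q : M, dist p q < ρ → dist p q < ρ' := by
    intro q hq
    rcases le_or_gt ρ 0 with h | h
    · linarith [dist_nonneg (x := p) (y := q)]
    · have := (ENNReal.ofReal_lt_ofReal_iff_of_nonneg h.le).mp hρρ'
      linarith
  classical
  refine ⟨fun q => if hq : ∃ g : ℝ → M, IsGeodesicFromTo g p q
    then hq.choose else fun _ => p, ?_⟩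
  intro q hq
  have hq' : dist p q < ρ' := hball q hq
  have hex : ∃ g : ℝ → M, IsGeodesicFromTo g p q := exists_geodesic hlen hInj hq'
  have hGq : IsGeodesicFromTo (if hq : ∃ g : ℝ → M, IsGeodesicFromTo g p q
      then hq.choose else fun _ => p) p q := by
    rw [dif_pos hex]
    exact hex.choose_spec
  refine ⟨hGq, ?_, ?_⟩
  · intro g hg
    exact geodesics_close hInj hq' hg hGq
  · intro ε hε
    obtain ⟨δ, hδ, hcont⟩ := geodesics_continuity hlen hInj hq' hε
    refine ⟨δ, hδ, ?_⟩
    intro q2 hq2 hq2d t ht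
    have hq2' : dist p q2 < ρ' := hball q2 hq2
    have hex2 : ∃ g : ℝ → M, IsGeodesicFromTo g p q2 := exists_geodesic hlen hInj hq2'
    have hGq2 : IsGeodesicFromTo (if hq : ∃ g : ℝ → M, IsGeodesicFromTo g p q2
        then hq.choose else fun _ => p) p q2 := by
      rw [dif_pos hex2]
      exact hex2.choose_spec
    exact hcont q2 hq2' hq2d _ _ hGq hGq2 t ht


end
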